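/- The function f(x) = x/sqrt(1-x^2) belongs to L^p(-1,1) for every 1 < p < 2 but not to L^2(-1,1), and its finite Hilbert transform satisfies T(f)(t) = 1 for almost every t ∈ (-1,1). -/

import Mathlib

open MeasureTheory Set Filter
open scoped ENNReal

noncomputable section

/-- The weight function `w(x) = sqrt(1 - x^2)`. -/
def w (x : ℝ) : ℝ := Real.sqrt (1 - x ^ 2)

/-- Lebesgue measure restricted to `(-1,1)`. -/
def μ1 : Measure ℝ := volume.restrict (Set.Ioo (-1 : ℝ) 1)

/-- The truncated principal value integral `(1/π) ∫_{(-1,1)\(t-ε,t+ε)} f(x)/(x-t) dx`. -/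
def pvIntegral (f : ℝ → ℝ) (t ε : ℝ) : ℝ :=
  (1 / Real.pi) * ∫ x in Set.Ioo (-1 : ℝ) 1 \ Set.Ioo (t - ε) (t + ε), f x / (x - t)

/-- `l` is the value of the finite Hilbert transform of `f` at `t`. -/
def HasFHTAt (f : ℝ → ℝ) (t l : ℝ) : Prop :=
  Filter.Tendsto (fun ε => pvIntegral f t ε) (nhdsWithin 0 (Set.Ioi 0)) (nhds l)

/-! ### Auxiliary definitions and lemmas -/

def DD (t x : ℝ) : ℝ := 1 - t * x + Real.sqrt (1 - t^2) * Real.sqrt (1 - x^2)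

def FF (t x : ℝ) : ℝ := Real.arcsin x +
  (t / Real.sqrt (1 - t^2)) * (Real.log (x - t) - Real.log (DD t x))

lemma DD_pos {t x : ℝ} (ht1 : -1 < t) (ht2 : t < 1) (hx1 : -1 ≤ x) (hx2 : x ≤ 1) :
    0 < DD t x := by
  have h1 : 0 < 1 - t * x := by
    nlinarith [mul_nonneg (by linarith : (0:ℝ) ≤ 1 - t) (by linarith : (0:ℝ) ≤ 1 + x),
      mul_nonneg (by linarith : (0:ℝ) ≤ 1 + t) (by linarith : (0:ℝ) ≤ 1 - x)]
  have h2 : 0 ≤ Real.sqrt (1 - t^2) * Real.sqrt (1 - x^2) :=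
    mul_nonneg (Real.sqrt_nonneg _) (Real.sqrt_nonneg _)
  unfold DD; linarith

lemma continuous_DD (t : ℝ) : Continuous (DD t) := by
  unfold DD; fun_prop

lemma hasDerivAt_FF {t x : ℝ} (ht1 : -1 < t) (ht2 : t < 1) (hx1 : -1 < x) (hx2 : x < 1)
    (hxt : x ≠ t) : HasDerivAt (FF t) (x / Real.sqrt (1 - x^2) / (x - t)) x := by
  set s := Real.sqrt (1 - x^2) with hs_def
  set st := Real.sqrt (1 - t^2) with hst_def
  have hx2pos : (0:ℝ) < 1 - x^2 := by nlinarith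
  have ht2pos : (0:ℝ) < 1 - t^2 := by nlinarith
  have hs : 0 < s := Real.sqrt_pos.2 hx2pos
  have hst : 0 < st := Real.sqrt_pos.2 ht2pos
  have hs2 : s^2 = 1 - x^2 := Real.sq_sqrt hx2pos.le
  have hst2 : st^2 = 1 - t^2 := Real.sq_sqrt ht2pos.le
  have hxt' : x - t ≠ 0 := sub_ne_zero.2 hxt
  have hD : 0 < DD t x := DD_pos ht1 ht2 hx1.le hx2.le
  have hDD : DD t x = 1 - t*x + st*s := rfl
  have d1 : HasDerivAt Real.arcsin (1 / s) x := Real.hasDerivAt_arcsin (by linarith) (by linarith)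
  have d2 : HasDerivAt (fun y : ℝ => y - t) 1 x := (hasDerivAt_id x).sub_const t
  have d3 : HasDerivAt (fun y : ℝ => Real.log (y - t)) (1 / (x - t)) x := d2.log hxt'
  have d4 : HasDerivAt (fun y : ℝ => 1 - y^2) (-(2*x)) x := by
    simpa using ((hasDerivAt_pow 2 x).const_sub 1)
  have d5 : HasDerivAt (fun y : ℝ => Real.sqrt (1 - y^2)) (-(2*x) / (2*s)) x :=
    d4.sqrt hx2pos.ne'
  have d6 : HasDerivAt (fun y : ℝ => DD t y) (-t + st * (-(2*x)/(2*s))) x := by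
    unfold DD
    have : HasDerivAt (fun y : ℝ => 1 - t*y) (-t) x := by
      simpa using ((hasDerivAt_id x).const_mul t).const_sub 1
    exact this.add (d5.const_mul st)
  have d7 : HasDerivAt (fun y : ℝ => Real.log (DD t y))
      ((-t + st * (-(2*x)/(2*s))) / (DD t x)) x := d6.log hD.ne'
  have dF : HasDerivAt (FF t)
      (1/s + (t/st) * (1/(x-t) - (-t + st * (-(2*x)/(2*s))) / (DD t x))) x := by
    unfold FF
    exact d1.add ((d3.sub d7).const_mul (t/st))
  convert dF using 1
  rw [hDD, div_div]
  have P : s*(1-t*x+st*s) + (x-t)*(t*s+st*x) = st*(1-t*x+st*s) := by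
    linear_combination st*hs2 - s*hst2
  have hDne : 1 - t*x + st*s ≠ 0 := by rw [← hDD]; exact hD.ne'
  have key : (1:ℝ)/(x-t) - (-t - st*(x/s))/(1 - t*x + st*s) = st/(s*(x-t)) := by
    have h : x/s*s = x := div_mul_cancel₀ x hs.ne'
    rw [div_sub_div _ _ hxt' hDne, div_eq_div_iff (mul_ne_zero hxt' hDne) (mul_ne_zero hs.ne' hxt')]
    linear_combination (x-t)*P + (x-t)^2*st*h
  have : -t + st * (-(2*x)/(2*s)) = -t - st*(x/s) := by
    field_simp; ring
  rw [this, key]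
  field_simp
  ring

lemma continuousOn_FF {t : ℝ} (ht1 : -1 < t) (ht2 : t < 1) {A : Set ℝ}
    (hsub : A ⊆ Icc (-1) 1) (hne : ∀ x ∈ A, x ≠ t) : ContinuousOn (FF t) A := by
  unfold FF
  refine (Real.continuous_arcsin.continuousOn).add (continuousOn_const.mul ?_)
  refine ContinuousOn.sub (ContinuousOn.log ?_ ?_) (ContinuousOn.log ?_ ?_)
  · exact (continuous_id.sub continuous_const).continuousOn
  · exact fun x hx => sub_ne_zero.2 (hne x hx)
  · exact (continuous_DD t).continuousOn
  · exact fun x hx => (DD_pos ht1 ht2 (hsub hx).1 (hsub hx).2).ne'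

lemma FF_one (t : ℝ) : FF t 1 = Real.pi / 2 := by
  unfold FF DD
  norm_num [Real.arcsin_one]

lemma FF_neg_one (t : ℝ) : FF t (-1) = -(Real.pi / 2) := by
  unfold FF DD
  rw [Real.arcsin_neg_one]
  have h1 : (-1:ℝ) - t = -(1+t) := by ring
  have h2 : 1 - t*(-1) + Real.sqrt (1-t^2) * Real.sqrt (1-(-1:ℝ)^2) = 1 + t := by
    norm_num
  rw [h1, Real.log_neg_eq_log, h2]
  ring

lemma int_inv_sqrt : IntegrableOn (fun x : ℝ => 1 / Real.sqrt (1 - x^2)) (Ioc (-1) 1) := by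
  apply intervalIntegral.integrableOn_deriv_of_nonneg (Real.continuous_arcsin.continuousOn)
  · intro x hx
    exact Real.hasDerivAt_arcsin hx.1.ne' hx.2.ne
  · intro x hx
    positivity

lemma meas_g (t : ℝ) : Measurable (fun x : ℝ => x / Real.sqrt (1 - x^2) / (x - t)) := by
  fun_prop

lemma int_g {t ε a b : ℝ} (hε : 0 < ε) (ha : -1 ≤ a) (hb : b ≤ 1)
    (hfar : ∀ x ∈ Ioc a b, ε ≤ |x - t|) :
    IntegrableOn (fun x : ℝ => x / Real.sqrt (1 - x^2) / (x - t)) (Ioc a b) := by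
  rcases le_or_gt b a with hba | hab
  · simp [Ioc_eq_empty_of_le hba, integrableOn_empty]
  have hsub : Ioc a b ⊆ Ioc (-1 : ℝ) 1 := Ioc_subset_Ioc ha hb
  refine Integrable.mono' (((int_inv_sqrt.mono_set hsub).const_mul ε⁻¹))
    ((meas_g t).aestronglyMeasurable) ?_
  refine (ae_restrict_iff' measurableSet_Ioc).2 (ae_of_all _ fun x hx => ?_)
  have hx1 : -1 < x := lt_of_le_of_lt ha hx.1
  have hxabs : |x| ≤ 1 := abs_le.2 ⟨hx1.le, hx.2.trans hb⟩
  set s := Real.sqrt (1 - x^2) with hs_def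
  have hs0 : 0 ≤ s := Real.sqrt_nonneg _
  have hfx : ε ≤ |x - t| := hfar x hx
  have hnorm : ‖x / s / (x - t)‖ = |x| / s * |x - t|⁻¹ := by
    rw [Real.norm_eq_abs, abs_div, abs_div, abs_of_nonneg hs0, div_eq_mul_inv]
  rw [hnorm]
  have h1 : |x| / s ≤ 1 / s := by
    rcases eq_or_lt_of_le hs0 with h | h
    · simp [← h]
    · gcongr
  have h2 : |x - t|⁻¹ ≤ ε⁻¹ := inv_anti₀ hε hfx
  calc |x| / s * |x - t|⁻¹ ≤ 1 / s * ε⁻¹ :=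
        mul_le_mul h1 h2 (inv_nonneg.2 (abs_nonneg _)) (by positivity)
    _ = ε⁻¹ * (1 / s) := by ring

lemma main_fht {t : ℝ} (ht1 : -1 < t) (ht2 : t < 1) :
    HasFHTAt (fun x => x / Real.sqrt (1 - x ^ 2)) t 1 := by
  unfold HasFHTAt
  set c := t / Real.sqrt (1 - t^2) with hc_def
  set Φ : ℝ → ℝ := fun ε => (1/Real.pi) * (Real.pi
      + (Real.arcsin (t-ε) - Real.arcsin (t+ε))
      + c * (Real.log (DD t (t+ε)) - Real.log (DD t (t-ε)))) with hΦ_def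
  have hδ : 0 < min (1+t) (1-t) := lt_min (by linarith) (by linarith)
  have hcong : ∀ᶠ ε in nhdsWithin 0 (Ioi 0), pvIntegral (fun x => x / Real.sqrt (1 - x ^ 2)) t ε = Φ ε := by
    filter_upwards [Ioo_mem_nhdsGT_of_mem (left_mem_Ico.2 hδ)] with ε hε
    obtain ⟨hε0, hεδ⟩ := hε
    have hε1 : ε < 1 + t := lt_of_lt_of_le hεδ (min_le_left _ _)
    have hε2 : ε < 1 - t := lt_of_lt_of_le hεδ (min_le_right _ _)
    have hL : IntegrableOn (fun x : ℝ => x / Real.sqrt (1 - x^2) / (x - t)) (Ioc (-1) (t-ε)) :=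
      int_g hε0 le_rfl (by linarith) (fun x hx => by
        rw [abs_of_nonpos (by linarith [hx.2])]; linarith [hx.2])
    have hR : IntegrableOn (fun x : ℝ => x / Real.sqrt (1 - x^2) / (x - t)) (Ioc (t+ε) 1) :=
      int_g hε0 (by linarith) le_rfl (fun x hx => by
        rw [abs_of_nonneg (by linarith [hx.1])]; linarith [hx.1])
    have hR' : IntegrableOn (fun x : ℝ => x / Real.sqrt (1 - x^2) / (x - t)) (Ico (t+ε) 1) := by
      rw [integrableOn_Ico_iff_integrableOn_Ioo]
      exact hR.mono_set Ioo_subset_Ioc_self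
    have hset : Ioo (-1:ℝ) 1 \ Ioo (t-ε) (t+ε) = Ioc (-1) (t-ε) ∪ Ico (t+ε) 1 := by
      ext x
      simp only [mem_diff, mem_Ioo, mem_union, mem_Ioc, mem_Ico, not_and, not_lt]
      constructor
      · rintro ⟨⟨h1, h2⟩, h3⟩
        by_cases hc : t - ε < x
        · exact Or.inr ⟨h3 hc, h2⟩
        · exact Or.inl ⟨h1, le_of_not_gt hc⟩
      · rintro (⟨h1, h2⟩ | ⟨h1, h2⟩)
        · exact ⟨⟨h1, by linarith⟩, fun h => by linarith⟩
        · exact ⟨⟨by linarith, h2⟩, fun h => by linarith⟩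
    have hdisj : Disjoint (Ioc (-1:ℝ) (t-ε)) (Ico (t+ε) 1) := by
      rw [Set.disjoint_left]
      intro x hx hx'
      have := hx.2; have := hx'.1; linarith
    have eqL : ∫ x in Ioc (-1) (t-ε), x / Real.sqrt (1 - x^2) / (x - t) = FF t (t-ε) - FF t (-1) := by
      rw [← intervalIntegral.integral_of_le (by linarith : (-1:ℝ) ≤ t-ε)]
      apply intervalIntegral.integral_eq_sub_of_hasDeriv_right_of_le (by linarith)
      · exact continuousOn_FF ht1 ht2 (Icc_subset_Icc le_rfl (by linarith))
          (fun x hx => ne_of_lt (lt_of_le_of_lt hx.2 (by linarith)))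
      · intro x hx
        exact (hasDerivAt_FF ht1 ht2 hx.1 (by linarith [hx.2])
          (ne_of_lt (by linarith [hx.2]))).hasDerivWithinAt
      · exact (intervalIntegrable_iff_integrableOn_Ioc_of_le (by linarith)).2 hL
    have eqR : ∫ x in Ioc (t+ε) 1, x / Real.sqrt (1 - x^2) / (x - t) = FF t 1 - FF t (t+ε) := by
      rw [← intervalIntegral.integral_of_le (by linarith : t+ε ≤ 1)]
      apply intervalIntegral.integral_eq_sub_of_hasDeriv_right_of_le (by linarith)
      · exact continuousOn_FF ht1 ht2 (Icc_subset_Icc (by linarith) le_rfl)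
          (fun x hx => ne_of_gt (lt_of_lt_of_le (by linarith) hx.1))
      · intro x hx
        exact (hasDerivAt_FF ht1 ht2 (by linarith [hx.1]) hx.2
          (ne_of_gt (by linarith [hx.1]))).hasDerivWithinAt
      · exact (intervalIntegrable_iff_integrableOn_Ioc_of_le (by linarith)).2 hR
    have hsplit : ∫ x in Ioo (-1:ℝ) 1 \ Ioo (t-ε) (t+ε), x / Real.sqrt (1 - x^2) / (x - t)
        = (FF t (t-ε) - FF t (-1)) + (FF t 1 - FF t (t+ε)) := by
      rw [hset, setIntegral_union hdisj measurableSet_Ico hL hR',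
        MeasureTheory.integral_Ico_eq_integral_Ioo,
        ← MeasureTheory.integral_Ioc_eq_integral_Ioo, eqL, eqR]
    have e1 : FF t (t-ε) = Real.arcsin (t-ε) + c*(Real.log ε - Real.log (DD t (t-ε))) := by
      unfold FF
      rw [show t-ε-t = -ε by ring, Real.log_neg_eq_log]
    have e2 : FF t (t+ε) = Real.arcsin (t+ε) + c*(Real.log ε - Real.log (DD t (t+ε))) := by
      unfold FF
      rw [show t+ε-t = ε by ring]
    unfold pvIntegral
    simp only
    rw [hsplit, FF_one, FF_neg_one, e1, e2, hΦ_def]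
    ring
  have hΦ0 : Φ 0 = 1 := by
    rw [hΦ_def]
    simp only [sub_zero, add_zero, sub_self, mul_zero]
    field_simp
  have hlim : Tendsto Φ (nhdsWithin 0 (Ioi 0)) (nhds 1) := by
    have hcont : ContinuousAt Φ 0 := by
      have harc1 : ContinuousAt (fun ε : ℝ => Real.arcsin (t-ε)) 0 :=
        Real.continuous_arcsin.continuousAt.comp ((continuous_const.sub continuous_id).continuousAt)
      have harc2 : ContinuousAt (fun ε : ℝ => Real.arcsin (t+ε)) 0 :=
        Real.continuous_arcsin.continuousAt.comp ((continuous_const.add continuous_id).continuousAt)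
      have hDt : DD t (t + 0) ≠ 0 := by
        rw [add_zero]; exact (DD_pos ht1 ht2 (by linarith) (by linarith)).ne'
      have hDt' : DD t (t - 0) ≠ 0 := by
        rw [sub_zero]; exact (DD_pos ht1 ht2 (by linarith) (by linarith)).ne'
      have hin1 : ContinuousAt (fun ε : ℝ => DD t (t+ε)) 0 := by
        exact ((continuous_DD t).comp (continuous_const.add continuous_id)).continuousAt
      have hin2 : ContinuousAt (fun ε : ℝ => DD t (t-ε)) 0 := by
        exact ((continuous_DD t).comp (continuous_const.sub continuous_id)).continuousAt
      have hlog1 : ContinuousAt (fun ε : ℝ => Real.log (DD t (t+ε))) 0 :=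
        hin1.log hDt
      have hlog2 : ContinuousAt (fun ε : ℝ => Real.log (DD t (t-ε))) 0 :=
        hin2.log hDt'
      exact continuousAt_const.mul
        ((continuousAt_const.add (harc1.sub harc2)).add (continuousAt_const.mul (hlog1.sub hlog2)))
    have := hcont.tendsto
    rw [hΦ0] at this
    exact this.mono_left nhdsWithin_le_nhds
  exact hlim.congr' (hcong.mono fun ε h => h.symm)

lemma not_memL2 : ¬ MemLp (fun x : ℝ => x / Real.sqrt (1 - x ^ 2)) 2 (volume.restrict (Set.Ioo (-1:ℝ) 1)) := by
  intro h
  have h2 : IntegrableOn (fun x : ℝ => (x / Real.sqrt (1 - x ^ 2)) ^ 2) (Ioo (-1:ℝ) 1) :=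
    h.integrable_sq
  have h3 : IntegrableOn (fun x : ℝ => (x / Real.sqrt (1 - x ^ 2)) ^ 2) (Ioo (1/2 : ℝ) 1) :=
    h2.mono_set (fun x hx => ⟨by linarith [hx.1], hx.2⟩)
  have h4 : IntegrableOn (fun x : ℝ => (x - 1)⁻¹) (Ioo (1/2 : ℝ) 1) := by
    refine Integrable.mono' (h3.const_mul 8) ((measurable_id.sub measurable_const).inv.aestronglyMeasurable) ?_
    refine (ae_restrict_iff' measurableSet_Ioo).2 (ae_of_all _ fun x hx => ?_)
    obtain ⟨hx1, hx2⟩ := hx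
    have hu : (0:ℝ) < 1 - x^2 := by nlinarith
    have hsq : Real.sqrt (1 - x^2) ^ 2 = 1 - x^2 := Real.sq_sqrt hu.le
    have hfx : (x / Real.sqrt (1 - x ^ 2)) ^ 2 = x^2 / (1 - x^2) := by
      rw [div_pow, hsq]
    have habs : |(x - 1)⁻¹| = (1 - x)⁻¹ := by
      rw [abs_inv, abs_of_nonpos (by linarith : x - 1 ≤ 0)]
      norm_num
    rw [Real.norm_eq_abs, habs, hfx]
    rw [inv_eq_one_div, div_le_iff₀ (by linarith : (0:ℝ) < 1 - x)]
    rw [show (8:ℝ) * (x ^ 2 / (1 - x ^ 2)) * (1 - x) = 8 * x^2 * (1-x) / (1-x^2) by ring,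
      le_div_iff₀ hu]
    nlinarith [sq_nonneg (x - 1/2), mul_nonneg (by linarith : (0:ℝ) ≤ 1 - x) (by nlinarith [sq_nonneg (x - 1/2)] : (0:ℝ) ≤ 8*x^2 - x - 1)]
  have h5 : IntervalIntegrable (fun x : ℝ => (x - 1)⁻¹) volume (1/2) 1 := by
    rw [intervalIntegrable_iff_integrableOn_Ioo_of_le (by norm_num)]
    exact h4
  have := intervalIntegrable_sub_inv_iff.1 h5
  rcases this with h | h
  · norm_num at h
  · exact h (by rw [Set.uIcc_of_le (by norm_num)]; exact ⟨by norm_num, le_rfl⟩)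

lemma memLp_of_lt_two (p : ℝ) (hp1 : 1 < p) (hp2 : p < 2) :
    MemLp (fun x : ℝ => x / Real.sqrt (1 - x ^ 2)) (ENNReal.ofReal p)
      (volume.restrict (Set.Ioo (-1 : ℝ) 1)) := by
  have hp0 : 0 < p := by linarith
  set r : ℝ := -(p/2) with hr_def
  have hr : -1 < r := by rw [hr_def]; linarith
  have hrle : r ≤ 0 := by rw [hr_def]; linarith
  set b : ℝ → ℝ := fun x => (1 - x) ^ r + (x + 1) ^ r with hb_def
  have i1 : IntervalIntegrable (fun y : ℝ => y ^ r) volume 0 2 :=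
    intervalIntegral.intervalIntegrable_rpow' hr
  have i2 : IntervalIntegrable (fun x : ℝ => (1 - x) ^ r) volume (-1) 1 := by
    have := (i1.comp_sub_left 1).symm
    norm_num at this
    exact this
  have i3 : IntervalIntegrable (fun x : ℝ => (x + 1) ^ r) volume (-1) 1 := by
    have := i1.comp_add_right 1
    norm_num at this
    exact this
  have hbint : IntegrableOn b (Ioo (-1 : ℝ) 1) := by
    have := (i2.add i3).1
    exact this.mono_set Ioo_subset_Ioc_self
  have hmeas : Measurable (fun x : ℝ => x / Real.sqrt (1 - x ^ 2)) := by fun_prop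
  refine ⟨hmeas.aestronglyMeasurable, ?_⟩
  rw [eLpNorm_lt_top_iff_lintegral_rpow_enorm_lt_top
    (by simpa using hp0) ENNReal.ofReal_ne_top, ENNReal.toReal_ofReal hp0.le]
  have hbound : ∫⁻ x in Ioo (-1 : ℝ) 1, (‖x / Real.sqrt (1 - x ^ 2)‖₊ : ℝ≥0∞) ^ p
      ≤ ∫⁻ x in Ioo (-1 : ℝ) 1, ENNReal.ofReal (b x) := by
    refine lintegral_mono_ae ((ae_restrict_iff' measurableSet_Ioo).2 (ae_of_all _ fun x hx => ?_))
    obtain ⟨hx1, hx2⟩ := hx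
    have hu : (0:ℝ) < 1 - x ^ 2 := by nlinarith
    set s := Real.sqrt (1 - x ^ 2) with hs_def
    have hs : 0 < s := Real.sqrt_pos.2 hu
    rw [← ENNReal.ofReal_coe_nnreal, coe_nnnorm, ENNReal.ofReal_rpow_of_nonneg (norm_nonneg _) hp0.le]
    apply ENNReal.ofReal_le_ofReal
    have h1 : ‖x / s‖ ≤ 1 / s := by
      rw [Real.norm_eq_abs, abs_div, abs_of_nonneg hs.le]
      gcongr
      exact abs_le.2 ⟨hx1.le, hx2.le⟩
    have h2 : ‖x / s‖ ^ p ≤ (1 / s) ^ p :=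
      Real.rpow_le_rpow (norm_nonneg _) h1 hp0.le
    have h3 : (1 / s) ^ p = (1 - x ^ 2) ^ r := by
      rw [hs_def, Real.sqrt_eq_rpow, one_div, ← Real.rpow_neg hu.le,
        ← Real.rpow_mul hu.le, show (-(1/(2:ℝ)))*p = r by rw [hr_def]; ring]
    have h4 : (1 - x ^ 2 : ℝ) ^ r ≤ b x := by
      rcases le_or_gt 0 x with hx0 | hx0
      · have : (1 - x : ℝ) ≤ 1 - x ^ 2 := by nlinarith
        have hle := Real.rpow_le_rpow_of_nonpos (by linarith : (0:ℝ) < 1 - x) this hrle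
        have : (0:ℝ) ≤ (x + 1) ^ r := Real.rpow_nonneg (by linarith) r
        rw [hb_def]; dsimp only; linarith
      · have : (x + 1 : ℝ) ≤ 1 - x ^ 2 := by nlinarith
        have hle := Real.rpow_le_rpow_of_nonpos (by linarith : (0:ℝ) < x + 1) this hrle
        have : (0:ℝ) ≤ (1 - x) ^ r := Real.rpow_nonneg (by linarith) r
        rw [hb_def]; dsimp only; linarith
    calc ‖x / s‖ ^ p ≤ (1 / s) ^ p := h2
      _ = (1 - x ^ 2) ^ r := h3
      _ ≤ b x := h4
  have hfin : ∫⁻ x in Ioo (-1 : ℝ) 1, ENNReal.ofReal (b x) < ∞ := by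
    have h := hbint.2
    rw [hasFiniteIntegral_iff_ofReal ((ae_restrict_iff' measurableSet_Ioo).2
      (ae_of_all _ fun x hx => by
        exact add_nonneg (Real.rpow_nonneg (by linarith [hx.1, hx.2] : (0:ℝ) ≤ 1 - x) r)
          (Real.rpow_nonneg (by linarith [hx.1] : (0:ℝ) ≤ x + 1) r)))] at h
    exact h
  exact lt_of_le_of_lt hbound hfin

/-- `x/√(1-x²)` is in `L^p(-1,1)` for `1 < p < 2`, not in `L^2(-1,1)`,
and its finite Hilbert transform equals `1` a.e. -/
theorem fht_x_div_w :
    (∀ p : ℝ, 1 < p → p < 2 →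
      MemLp (fun x => x / Real.sqrt (1 - x ^ 2)) (ENNReal.ofReal p) μ1) ∧
    ¬ MemLp (fun x => x / Real.sqrt (1 - x ^ 2)) 2 μ1 ∧
    (∀ᵐ t ∂μ1, HasFHTAt (fun x => x / Real.sqrt (1 - x ^ 2)) t 1) := by
  refine ⟨?_, ?_, ?_⟩
  · intro p hp1 hp2
    unfold μ1
    exact memLp_of_lt_two p hp1 hp2
  · unfold μ1
    exact not_memL2
  · unfold μ1
    exact (ae_restrict_iff' measurableSet_Ioo).2 (ae_of_all _ fun t ht => main_fht ht.1 ht.2)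

end
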